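/- Assume the class number of A is 1 and d_∞ = 1, with uniformizer π_∞ = π_p^{-1} for a degree-1 prime p with positive generator π_p. For every y ∈ ℤ_p, the character Ψ_y : G_S → U_1(∞) defined on Frobenius elements by Ψ_y(φ_ν) = ⟨π_ν⟩_∞^{-y} satisfies Ψ_y = y-th power map ∘ π̂ ∘ rec_S^{-1}, where rec_S : completed idele class group mod units outside S → G_S is the Artin reciprocity isomorphism and π̂ is the projection onto the 1-unit component U_1(∞) in the decomposition of the completed idele class group. -/

import Mathlib

/-- Assume the class number of `A` is 1 and `d_∞ = 1`, so that the
completed idele class group `Ĉ = widehat{C_F/O_S}` decomposes as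
`Ẑ × U₁(∞) × ∏_{ν ∈ S, ν ≠ ∞} O_νˣ`, with projection `π̂ : Ĉ → U₁(∞)` onto the
1-unit component, and Artin reciprocity gives a topological isomorphism
`rec_S : Ĉ ≃ G_S`.  The 1-units `U` form a topological `ℤ_p`-module with power map
`pow : U → ℤ_p → U` (so `u^y` makes sense for `y ∈ ℤ_p`).  For `y ∈ ℤ_p` let
`Ψ_y : G_S → U` be the continuous character with `Ψ_y(φ_ν) = ⟨π_ν⟩_∞^{-y}` on the
(topologically generating) Frobenius elements; since `π̂(rec_S⁻¹(φ_ν)) = ⟨π_ν⟩_∞⁻¹`,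
the diagram commutes:  `Ψ_y = (·^y) ∘ π̂ ∘ rec_S⁻¹` on all of `G_S`. -/
theorem stmt19 (p : ℕ) [Fact p.Prime]
    -- the group of 1-units with its ℤ_p-power structure
    (U : Type*) [CommGroup U] [TopologicalSpace U] [IsTopologicalGroup U] [T2Space U]
    (pow : U → ℤ_[p] → U)
    (hpow_one : ∀ u : U, pow u 1 = u)
    (hpow_add : ∀ (u : U) (y z : ℤ_[p]), pow u (y + z) = pow u y * pow u z)
    (hpow_mul : ∀ (u v : U) (y : ℤ_[p]), pow (u * v) y = pow u y * pow v y)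
    (hpow_cont : ∀ y : ℤ_[p], Continuous fun u : U => pow u y)
    -- the Galois group `G_S`, the completed idele class group `Ĉ`,
    -- reciprocity `rec` and the projection `π̂` onto the 1-unit component
    (G : Type*) [CommGroup G] [TopologicalSpace G] [IsTopologicalGroup G]
    (Chat : Type*) [CommGroup Chat] [TopologicalSpace Chat] [IsTopologicalGroup Chat]
    (rec : Chat ≃* G) (hrec_cont : Continuous rec) (hrec_symm_cont : Continuous rec.symm)
    (pihat : Chat →* U) (hpihat_cont : Continuous pihat)
    -- the Frobenius elements `φ ν` (for places `ν ∉ S`), which topologically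
    -- generate `G_S`, and the 1-unit parts `u ν = ⟨π_ν⟩_∞` of their uniformizers
    (P : Type*) (φ : P → G) (u : P → U)
    (hgen : Dense ((Subgroup.closure (Set.range φ) : Subgroup G) : Set G))
    (hfrob : ∀ ν : P, pihat (rec.symm (φ ν)) = (u ν)⁻¹)
    -- the character Ψ_y
    (y : ℤ_[p]) (Ψ : G →* U) (hΨ_cont : Continuous Ψ)
    (hΨ_frob : ∀ ν : P, Ψ (φ ν) = pow ((u ν)⁻¹) y) :
    ∀ g : G, Ψ g = pow (pihat (rec.symm g)) y := by
  have hpow_one' : pow 1 y = 1 := by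
    have h := hpow_mul 1 1 y
    rw [mul_one] at h
    exact left_eq_mul.mp h
  set f : G → U := fun g => pow (pihat (rec.symm g)) y with hf
  have hf_cont : Continuous f :=
    (hpow_cont y).comp (hpihat_cont.comp hrec_symm_cont)
  have hf_one : f 1 = 1 := by simp [hf, hpow_one']
  have hf_mul : ∀ a b : G, f (a * b) = f a * f b := by
    intro a b
    simp [hf, map_mul, hpow_mul]
  have hf_inv : ∀ a : G, f a⁻¹ = (f a)⁻¹ := by
    intro a
    have h := hf_mul a a⁻¹
    rw [mul_inv_cancel, hf_one] at h
    exact eq_inv_of_mul_eq_one_right h.symm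
  have heq : Set.EqOn Ψ f ((Subgroup.closure (Set.range φ) : Subgroup G) : Set G) := by
    intro g hg
    induction hg using Subgroup.closure_induction with
    | mem x hx =>
      obtain ⟨ν, rfl⟩ := hx
      rw [hΨ_frob ν, hf, ← hfrob ν]
    | one => simp [hf_one]
    | mul a b _ _ ha hb => rw [map_mul, hf_mul, ha, hb]
    | inv a _ ha => rw [map_inv, hf_inv, ha]
  have := Continuous.ext_on hgen hΨ_cont hf_cont heq
  intro g; exact congrFun this g
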